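/- arXiv:2303.01280 — 2 statements merged into one kernel-verified Lean document; each statement's English description precedes it below -/
import Mathlib

section
/- Let (X,d,m) be a length PI space and let E ⊆ X be a set of finite perimeter with m(E) > 0 and m(X \ E) > 0. Then P(E) > 0. -/
open MeasureTheory Metric Set Filter Topology ENNReal Bornology
open scoped symmDiff

noncomputable section

variable {X : Type*}

/-- The slope (pointwise Lipschitz constant) of `f` at `x`, computed within `Ω`.
It vanishes at points that are isolated in `Ω`. -/
def slopeOn [MetricSpace X] (Ω : Set X) (f : X → ℝ) (x : X) : ℝ≥0∞ :=
  Filter.limsup (fun y => ENNReal.ofReal (|f x - f y| / dist x y)) (𝓝[Ω \ {x}] x)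

/-- The slope of `f`. -/
def mSlope [MetricSpace X] (f : X → ℝ) (x : X) : ℝ≥0∞ := slopeOn Set.univ f x

/-- `f` is locally Lipschitz on `Ω`. -/
def LocLipOn [MetricSpace X] (Ω : Set X) (f : X → ℝ) : Prop :=
  ∀ x ∈ Ω, ∃ r > (0:ℝ), ∃ K : NNReal, LipschitzOnWith K f (Metric.ball x r ∩ Ω)

/-- Convergence `fn → f` in `L¹_loc(Ω)` w.r.t. the measure `m`. -/
def TendstoL1loc [MetricSpace X] [MeasurableSpace X] (m : Measure X) (Ω : Set X)
    (fn : ℕ → X → ℝ) (f : X → ℝ) : Prop :=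
  ∀ K : Set X, K ⊆ Ω → IsCompact K →
    Tendsto (fun n => ∫⁻ x in K, ENNReal.ofReal |fn n x - f x| ∂m) atTop (𝓝 0)

/-- The total variation `|Df|(B)` of `f : X → ℝ` on the set `B`. -/
def totVar [MetricSpace X] [MeasurableSpace X] (m : Measure X) (f : X → ℝ) (B : Set X) : ℝ≥0∞ :=
  ⨅ (Ω : Set X) (_ : IsOpen Ω) (_ : B ⊆ Ω),
    ⨅ (fn : ℕ → X → ℝ) (_ : ∀ n, LocLipOn Ω (fn n)) (_ : TendstoL1loc m Ω fn f),
      Filter.liminf (fun n => ∫⁻ x in Ω, slopeOn Ω (fn n) x ∂m) atTop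

/-- The perimeter `P(E, B)` of a set `E` in `B`. -/
def Per [MetricSpace X] [MeasurableSpace X] (m : Measure X) (E B : Set X) : ℝ≥0∞ :=
  totVar m (Set.indicator E fun _ => (1:ℝ)) B

/-- `E` has locally finite perimeter. -/
def HasLocFinPer [MetricSpace X] [MeasurableSpace X] (m : Measure X) (E : Set X) : Prop :=
  ∀ x : X, ∃ r > (0:ℝ), Per m E (Metric.ball x r) < ∞

/-- `E` has finite perimeter. -/
def HasFinPer [MetricSpace X] [MeasurableSpace X] (m : Measure X) (E : Set X) : Prop :=
  Per m E Set.univ < ∞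

/-- `m` is finite on bounded sets. -/
def BoundedlyFinite [MetricSpace X] [MeasurableSpace X] (m : Measure X) : Prop :=
  ∀ B : Set X, Bornology.IsBounded B → m B < ∞

/-- Uniformly locally doubling with doubling function `C_D`. -/
def UnifLocDoublingWith [MetricSpace X] [MeasurableSpace X] (C_D : ℝ → ℝ) (m : Measure X) : Prop :=
  ∀ R : ℝ, 0 < R → ∀ x : X, ∀ r : ℝ, 0 < r → r < R →
    m (Metric.ball x (2 * r)) ≤ ENNReal.ofReal (C_D R) * m (Metric.ball x r)

/-- Weak local (1,1)-Poincaré inequality with dilation `lam` and constant function `C_P`. -/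
def WeakPoincareWith [MetricSpace X] [MeasurableSpace X] (lam : ℝ) (C_P : ℝ → ℝ)
    (m : Measure X) : Prop :=
  ∀ f : X → ℝ, LocLipOn Set.univ f → ∀ R : ℝ, 0 < R → ∀ x : X, ∀ r : ℝ, 0 < r → r < R →
    (∫⁻ y in Metric.ball x r,
        ENNReal.ofReal |f y - ⨍ z in Metric.ball x r, f z ∂m| ∂m) / m (Metric.ball x r)
      ≤ ENNReal.ofReal (C_P R * r) *
          ((∫⁻ y in Metric.ball x (lam * r), mSlope f y ∂m) / m (Metric.ball x (lam * r)))

/-- `(X, d, m)` is a PI space. -/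
def IsPIspace [MetricSpace X] [MeasurableSpace X] (m : Measure X) : Prop :=
  (∃ C_D : ℝ → ℝ, (∀ R, 0 < R → 0 < C_D R) ∧ UnifLocDoublingWith C_D m) ∧
  (∃ lam : ℝ, 1 ≤ lam ∧ ∃ C_P : ℝ → ℝ, (∀ R, 0 < R → 0 < C_P R) ∧ WeakPoincareWith lam C_P m)

/-- `(X, d)` is a length space: the distance between two points is the infimum of the
lengths of continuous curves joining them. -/
def IsLengthSpace (X : Type*) [MetricSpace X] : Prop :=
  ∀ p q : X, ENNReal.ofReal (dist p q) =
    ⨅ (γ : ℝ → X) (_ : ContinuousOn γ (Set.Icc 0 1)) (_ : γ 0 = p) (_ : γ 1 = q),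
      eVariationOn γ (Set.Icc 0 1)

/-- Essential interior `E^{(1)}`. -/
def essInt [MetricSpace X] [MeasurableSpace X] (m : Measure X) (E : Set X) : Set X :=
  { x | Tendsto (fun r : ℝ => m (E ∩ Metric.ball x r) / m (Metric.ball x r)) (𝓝[>] 0) (𝓝 1) }

/-- Essential exterior `E^{(0)}`. -/
def essExt [MetricSpace X] [MeasurableSpace X] (m : Measure X) (E : Set X) : Set X :=
  { x | Tendsto (fun r : ℝ => m (E ∩ Metric.ball x r) / m (Metric.ball x r)) (𝓝[>] 0) (𝓝 0) }

/-- Essential boundary `∂^e E`. -/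
def essBdry [MetricSpace X] [MeasurableSpace X] (m : Measure X) (E : Set X) : Set X :=
  (essInt m E ∪ essExt m E)ᶜ

/-- The two deformation inequalities hold for `E` at `x` with radius `R` and constant `C`. -/
def DeformIneq [MetricSpace X] [MeasurableSpace X] (m : Measure X) (E : Set X) (x : X)
    (R C : ℝ) : Prop :=
  ∀ y ∈ Metric.ball x R, ∀ r ∈ Set.Ioo (0:ℝ) R,
    Per m (E \ Metric.ball y r) (Metric.ball x (2 * R)) ≤
      ENNReal.ofReal C * m (Metric.ball y r ∩ E) / ENNReal.ofReal r +
        Per m E (Metric.ball x (2 * R)) ∧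
    Per m (E ∪ Metric.ball y r) (Metric.ball x (2 * R)) ≤
      ENNReal.ofReal C * m (Metric.ball y r \ E) / ENNReal.ofReal r +
        Per m E (Metric.ball x (2 * R))

/-- The deformation inequalities hold for `E` at `x` with radius `R` and some constant. -/
def DeformAt [MetricSpace X] [MeasurableSpace X] (m : Measure X) (E : Set X) (x : X)
    (R : ℝ) : Prop :=
  0 < R ∧ R ≤ 1 ∧ ∃ C : ℝ, 0 ≤ C ∧ DeformIneq m E x R C

/-- `R_x(E)`: the maximal radius in `(0,1]` for which the deformation inequalities hold. -/
def deformRadius [MetricSpace X] [MeasurableSpace X] (m : Measure X) (E : Set X) (x : X) : ℝ :=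
  sSup { R : ℝ | DeformAt m E x R }

/-- `(X, d, m)` has the deformation property. -/
def DeformationProperty [MetricSpace X] [MeasurableSpace X] (m : Measure X) : Prop :=
  ∀ E : Set X, MeasurableSet E → HasLocFinPer m E → ∀ x : X, ∃ R : ℝ, DeformAt m E x R

/-- `E` is a volume-constrained minimizer of the perimeter. -/
def VolConstMin [MetricSpace X] [MeasurableSpace X] (m : Measure X) (E : Set X) : Prop :=
  MeasurableSet E ∧ HasLocFinPer m E ∧
    ∀ F K : Set X, MeasurableSet F → IsCompact K →
      m ((E ∆ F) \ K) = 0 → m (E ∩ K) = m (F ∩ K) → Per m E K ≤ Per m F K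

/-- `E` is an isoperimetric set. -/
def IsIsoperimetricSet [MetricSpace X] [MeasurableSpace X] (m : Measure X) (E : Set X) : Prop :=
  MeasurableSet E ∧ HasFinPer m E ∧ 0 < m E ∧ m E < ∞ ∧
    ∀ F : Set X, MeasurableSet F → m F = m E → Per m E Set.univ ≤ Per m F Set.univ


section AuxiliaryLemmas

variable {Y : Type*} [MetricSpace Y] [MeasurableSpace Y]

/-- Iterated doubling: `m(B(x, 2^k t)) ≤ C^k m(B(x,t))` as long as all radii stay below `R`. -/
lemma aux_doubling_pow {C_D : ℝ → ℝ} {m : Measure Y} (hd : UnifLocDoublingWith C_D m)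
    {R : ℝ} (hR : 0 < R) (x : Y) {t : ℝ} (ht : 0 < t) :
    ∀ k : ℕ, 2 ^ k * t ≤ R →
      m (Metric.ball x (2 ^ k * t)) ≤ (ENNReal.ofReal (C_D R)) ^ k * m (Metric.ball x t) := by
  intro k
  induction k with
  | zero => intro _; simp
  | succ k ih =>
    intro hk
    have h2 : (2:ℝ) ^ k * t < 2 ^ (k+1) * t := by
      have : (2:ℝ) ^ k < 2 ^ (k+1) := by
        exact pow_lt_pow_right₀ (by norm_num) (Nat.lt_succ_self k)
      nlinarith
    have hklt : (2:ℝ) ^ k * t < R := lt_of_lt_of_le h2 hk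
    have hpos : 0 < (2:ℝ) ^ k * t := by positivity
    have hstep := hd R hR x ((2:ℝ)^k * t) hpos hklt
    have heq : (2:ℝ) ^ (k+1) * t = 2 * ((2:ℝ)^k * t) := by ring
    rw [heq]
    calc m (Metric.ball x (2 * (2 ^ k * t)))
        ≤ ENNReal.ofReal (C_D R) * m (Metric.ball x (2 ^ k * t)) := hstep
      _ ≤ ENNReal.ofReal (C_D R) * ((ENNReal.ofReal (C_D R)) ^ k * m (Metric.ball x t)) :=
          mul_le_mul_right (ih hklt.le) _
      _ = (ENNReal.ofReal (C_D R)) ^ (k+1) * m (Metric.ball x t) := by ring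

/-- If a large ball has positive measure, so does any small ball around the same point. -/
lemma aux_pos_down {C_D : ℝ → ℝ} {m : Measure Y} (hd : UnifLocDoublingWith C_D m)
    {x : Y} {T : ℝ} (hT : 0 < m (Metric.ball x T)) {s : ℝ} (hs : 0 < s) :
    0 < m (Metric.ball x s) := by
  rcases le_or_gt T s with h | h
  · exact hT.trans_le (measure_mono (Metric.ball_subset_ball h))
  · obtain ⟨k, hk⟩ : ∃ k : ℕ, T < 2 ^ k * s := by
      obtain ⟨k, hk⟩ := pow_unbounded_of_one_lt (T / s) (by norm_num : (1:ℝ) < 2)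
      exact ⟨k, by rwa [div_lt_iff₀ hs] at hk⟩
    have hR : (0:ℝ) < 2 ^ k * s := by positivity
    have h1 : m (Metric.ball x T) ≤ m (Metric.ball x (2 ^ k * s)) :=
      measure_mono (Metric.ball_subset_ball hk.le)
    have h2 := aux_doubling_pow hd hR x hs k le_rfl
    rw [pos_iff_ne_zero]
    intro h0
    rw [h0, mul_zero] at h2
    exact (hT.trans_le (h1.trans h2)).false

/-- If some ball has positive measure, then all balls have positive measure. -/
lemma aux_balls_pos {C_D : ℝ → ℝ} {m : Measure Y} (hd : UnifLocDoublingWith C_D m)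
    {x₀ : Y} {T : ℝ} (hT : 0 < m (Metric.ball x₀ T)) :
    ∀ y : Y, ∀ s : ℝ, 0 < s → 0 < m (Metric.ball y s) := by
  intro y s hs
  have hTpos : 0 < T := by
    by_contra h
    push_neg at h
    rw [Metric.ball_eq_empty.2 h] at hT
    simp at hT
  have hsub : Metric.ball x₀ T ⊆ Metric.ball y (dist y x₀ + T) := by
    intro z hz
    rw [Metric.mem_ball] at hz ⊢
    calc dist z y ≤ dist z x₀ + dist x₀ y := dist_triangle _ _ _
      _ < T + dist x₀ y := by linarith
      _ = dist y x₀ + T := by rw [dist_comm]; ring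
  exact aux_pos_down hd (hT.trans_le (measure_mono hsub)) hs

/-- In a nontrivial-measure doubling space, all balls have positive measure. -/
lemma aux_all_balls_pos {C_D : ℝ → ℝ} {m : Measure Y} (hd : UnifLocDoublingWith C_D m)
    (hm : m ≠ 0) : ∀ y : Y, ∀ s : ℝ, 0 < s → 0 < m (Metric.ball y s) := by
  have huniv : 0 < m Set.univ := by
    rw [pos_iff_ne_zero]
    simpa [Measure.measure_univ_eq_zero] using hm
  have hne : Nonempty Y := by
    by_contra h
    rw [not_nonempty_iff] at h
    rw [Set.univ_eq_empty_iff.2 h] at huniv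
    simp at huniv
  obtain ⟨x₀⟩ := hne
  have : ∃ n : ℕ, 0 < m (Metric.ball x₀ n) := by
    by_contra h
    push_neg at h
    simp only [nonpos_iff_eq_zero] at h
    have : m (⋃ n : ℕ, Metric.ball x₀ n) = 0 := measure_iUnion_null h
    rw [Metric.iUnion_ball_nat] at this
    exact huniv.ne' this
  obtain ⟨n, hn⟩ := this
  exact aux_balls_pos hd hn

/-- Doubling + boundedly finite implies balls are totally bounded. -/
lemma aux_totallyBounded [OpensMeasurableSpace Y] {C_D : ℝ → ℝ} {m : Measure Y}
    (hd : UnifLocDoublingWith C_D m) (hbf : BoundedlyFinite m)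
    (hpos : ∀ y : Y, ∀ s : ℝ, 0 < s → 0 < m (Metric.ball y s)) (x : Y) (r : ℝ) :
    TotallyBounded (Metric.ball x r) := by
  classical
  rcases le_or_gt r 0 with hr | hr
  · rw [Metric.ball_eq_empty.2 hr]; exact totallyBounded_empty
  by_contra hcon
  rw [Metric.totallyBounded_iff] at hcon
  push_neg at hcon
  obtain ⟨ε, hε, hsep⟩ := hcon
  -- construct an ε-separated sequence in the ball
  have hne : ∀ t : Finset Y,
      (Metric.ball x r \ ⋃ y ∈ (t : Set Y), Metric.ball y ε).Nonempty := by
    intro t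
    have := hsep (t : Set Y) t.finite_toSet
    rw [Set.not_subset] at this
    obtain ⟨z, hz, hz'⟩ := this
    exact ⟨z, hz, hz'⟩
  let f : Finset Y → Y := fun t => (hne t).some
  have hf : ∀ t : Finset Y,
      f t ∈ Metric.ball x r \ ⋃ y ∈ (t : Set Y), Metric.ball y ε := fun t => (hne t).some_mem
  let g : ℕ → Finset Y := fun n => Nat.rec (∅ : Finset Y) (fun _ t => insert (f t) t) n
  let p : ℕ → Y := fun n => f (g n)
  have hg_succ : ∀ n, g (n+1) = insert (p n) (g n) := fun n => rfl
  have hg_mono : ∀ i j : ℕ, i ≤ j → g i ⊆ g j := by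
    intro i j hij
    induction j, hij using Nat.le_induction with
    | base => exact Finset.Subset.refl _
    | succ j hij ih => rw [hg_succ]; exact ih.trans (Finset.subset_insert _ _)
  have hp_mem : ∀ i j : ℕ, i < j → p i ∈ g j := by
    intro i j hij
    have : p i ∈ g (i+1) := by rw [hg_succ]; exact Finset.mem_insert_self _ _
    exact hg_mono (i+1) j hij this
  have hp_ball : ∀ n, p n ∈ Metric.ball x r := fun n => (hf (g n)).1
  have hp_sep : ∀ i j : ℕ, i < j → ε ≤ dist (p i) (p j) := by
    intro i j hij
    by_contra h
    push_neg at h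
    apply (hf (g j)).2
    refine Set.mem_iUnion₂.2 ⟨p i, ?_, ?_⟩
    · exact hp_mem i j hij
    · rw [Metric.mem_ball, dist_comm]; exact h
  -- disjoint balls of radius ε/2
  have hdisj : Pairwise fun i j => Disjoint (Metric.ball (p i) (ε/2)) (Metric.ball (p j) (ε/2)) := by
    intro i j hij
    rcases lt_or_gt_of_ne hij with h | h
    · exact Metric.ball_disjoint_ball (by linarith [hp_sep i j h])
    · exact (Metric.ball_disjoint_ball (by linarith [hp_sep j i h])).symm
  -- each small ball has measure at least δ
  obtain ⟨k, hk⟩ : ∃ k : ℕ, 2 * r ≤ 2 ^ k * (ε/2) := by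
    obtain ⟨k, hk⟩ := pow_unbounded_of_one_lt ((2*r) / (ε/2)) (by norm_num : (1:ℝ) < 2)
    exact ⟨k, by rw [div_lt_iff₀ (by linarith)] at hk; linarith⟩
  set R : ℝ := 2 ^ k * (ε/2) with hRdef
  have hRpos : (0:ℝ) < R := by positivity
  set C : ℝ≥0∞ := (ENNReal.ofReal (C_D R)) ^ k with hCdef
  have hCne : C ≠ ∞ := by
    rw [hCdef]
    exact ENNReal.pow_ne_top ENNReal.ofReal_ne_top
  have hlower : ∀ n : ℕ, m (Metric.ball x r) ≤ C * m (Metric.ball (p n) (ε/2)) := by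
    intro n
    have hsub : Metric.ball x r ⊆ Metric.ball (p n) R := by
      intro z hz
      rw [Metric.mem_ball] at hz ⊢
      have h1 : dist x (p n) < r := by rw [dist_comm]; exact hp_ball n
      calc dist z (p n) ≤ dist z x + dist x (p n) := dist_triangle _ _ _
        _ < r + r := by linarith
        _ ≤ R := by linarith
    calc m (Metric.ball x r) ≤ m (Metric.ball (p n) R) := measure_mono hsub
      _ ≤ C * m (Metric.ball (p n) (ε/2)) :=
          aux_doubling_pow hd hRpos (p n) (by linarith) k le_rfl
  set δ : ℝ≥0∞ := m (Metric.ball x r) / C with hδdef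
  have hδpos : δ ≠ 0 := by
    rw [hδdef]
    simp only [ne_eq, ENNReal.div_eq_zero_iff, not_or]
    exact ⟨(hpos x r hr).ne', hCne⟩
  have hδle : ∀ n : ℕ, δ ≤ m (Metric.ball (p n) (ε/2)) := by
    intro n
    rw [hδdef]
    rcases eq_or_ne C 0 with hC0 | hC0
    · rw [hC0] at hlower
      simp only [zero_mul, nonpos_iff_eq_zero] at hlower
      exact absurd (hlower n) (hpos x r hr).ne'
    · exact (ENNReal.div_le_iff_le_mul (Or.inl hC0) (Or.inl hCne)).2
        (by rw [mul_comm]; exact hlower n)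
  -- union of the disjoint balls has infinite measure, but lies in a bounded set
  have hunion_le : m (⋃ n : ℕ, Metric.ball (p n) (ε/2)) ≤ m (Metric.ball x (r + ε/2)) := by
    apply measure_mono
    apply Set.iUnion_subset
    intro n z hz
    rw [Metric.mem_ball] at hz ⊢
    have := hp_ball n
    rw [Metric.mem_ball] at this
    calc dist z x ≤ dist z (p n) + dist (p n) x := dist_triangle _ _ _
      _ < ε/2 + r := by linarith
      _ = r + ε/2 := by ring
  have hfin : m (Metric.ball x (r + ε/2)) < ∞ := hbf _ Metric.isBounded_ball
  have heq : m (⋃ n : ℕ, Metric.ball (p n) (ε/2)) = ∑' n : ℕ, m (Metric.ball (p n) (ε/2)) :=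
    measure_iUnion hdisj fun n => measurableSet_ball
  have htop : (∞ : ℝ≥0∞) ≤ ∑' n : ℕ, m (Metric.ball (p n) (ε/2)) := by
    calc (∞ : ℝ≥0∞) = ∑' _ : ℕ, δ := (ENNReal.tsum_const_eq_top_of_ne_zero hδpos).symm
      _ ≤ ∑' n : ℕ, m (Metric.ball (p n) (ε/2)) := ENNReal.tsum_le_tsum hδle
  rw [← heq] at htop
  exact hfin.ne (top_le_iff.1 (htop.trans hunion_le))

/-- Closed balls are compact. -/
lemma aux_closedBall_compact [CompleteSpace Y] [OpensMeasurableSpace Y] {C_D : ℝ → ℝ} {m : Measure Y}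
    (hd : UnifLocDoublingWith C_D m) (hbf : BoundedlyFinite m)
    (hpos : ∀ y : Y, ∀ s : ℝ, 0 < s → 0 < m (Metric.ball y s)) (x : Y) (r : ℝ) :
    IsCompact (Metric.closedBall x r) := by
  have htb : TotallyBounded (Metric.closedBall x r) := by
    apply TotallyBounded.subset (Metric.closedBall_subset_ball (lt_add_one r))
    exact aux_totallyBounded hd hbf hpos x (r+1)
  exact TotallyBounded.isCompact_of_isClosed htb Metric.isClosed_closedBall

/-- A set of positive measure has a point around which it has positive measure at all scales. -/
lemma aux_density_point [TopologicalSpace.SeparableSpace Y] {m : Measure Y} {E : Set Y}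
    (hE : 0 < m E) : ∃ x : Y, ∀ s : ℝ, 0 < s → 0 < m (E ∩ Metric.ball x s) := by
  obtain ⟨D, hDc, hDd⟩ := TopologicalSpace.exists_countable_dense Y
  set T : Set (Y × ℚ) := {p | p.1 ∈ D ∧ m (E ∩ Metric.ball p.1 (p.2 : ℝ)) = 0} with hT
  have hTc : T.Countable := (hDc.prod (Set.countable_univ)).mono fun p hp => Set.mem_prod.2 ⟨hp.1, Set.mem_univ _⟩
  set U : Set Y := ⋃ p ∈ T, Metric.ball p.1 (p.2 : ℝ) with hU
  have hEU : m (E ∩ U) = 0 := by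
    rw [hU, Set.inter_iUnion₂]
    exact measure_biUnion_null_iff hTc |>.2 fun p hp => hp.2
  have hEdiff : 0 < m (E \ U) := by
    by_contra h
    push_neg at h
    rw [nonpos_iff_eq_zero] at h
    have := measure_le_inter_add_diff m E U
    rw [hEU, h, add_zero] at this
    exact hE.ne' (le_antisymm this zero_le)
  obtain ⟨x, hxE, hxU⟩ := nonempty_of_measure_ne_zero hEdiff.ne'
  refine ⟨x, fun s hs => ?_⟩
  by_contra h
  push_neg at h
  rw [nonpos_iff_eq_zero] at h
  obtain ⟨d, hdD, hdx⟩ := hDd.exists_dist_lt x (by linarith : (0:ℝ) < s/4)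
  obtain ⟨q, hq1, hq2⟩ := exists_rat_btwn (by linarith : s/4 < s/2)
  have hxball : x ∈ Metric.ball d (q : ℝ) := by
    rw [Metric.mem_ball]
    linarith
  have hsub : Metric.ball d (q : ℝ) ⊆ Metric.ball x s := by
    intro z hz
    rw [Metric.mem_ball] at hz ⊢
    calc dist z x ≤ dist z d + dist d x := dist_triangle _ _ _
      _ < (q:ℝ) + (q:ℝ) := by rw [dist_comm d x]; linarith
      _ < s := by linarith
  have hdT : (d, q) ∈ T := by
    refine ⟨hdD, ?_⟩
    have : E ∩ Metric.ball d (q:ℝ) ⊆ E ∩ Metric.ball x s := Set.inter_subset_inter_right _ hsub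
    exact le_antisymm (h ▸ measure_mono this) zero_le
  exact hxU (Set.mem_biUnion hdT hxball)

/-- A locally Lipschitz function on `univ` is continuous. -/
lemma aux_continuous {f : Y → ℝ} (hf : LocLipOn Set.univ f) : Continuous f := by
  rw [continuous_iff_continuousAt]
  intro x
  obtain ⟨r, hr, K, hK⟩ := hf x trivial
  rw [Set.inter_univ] at hK
  exact hK.continuousOn.continuousAt (Metric.ball_mem_nhds x hr)

/-- Lower bound for the oscillation integral of an indicator against any constant. -/
lemma aux_indicator_lower {m : Measure Y} {E B : Set Y} (hE : MeasurableSet E)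
    (hB : MeasurableSet B) (c : ℝ) :
    min (m (B ∩ E)) (m (B \ E)) ≤
      ∫⁻ z in B, ENNReal.ofReal |Set.indicator E (fun _ => (1:ℝ)) z - c| ∂m := by
  set M := min (m (B ∩ E)) (m (B \ E)) with hM
  have hsplit : ∫⁻ z in B, ENNReal.ofReal |Set.indicator E (fun _ => (1:ℝ)) z - c| ∂m
      = (∫⁻ z in B ∩ E, ENNReal.ofReal |Set.indicator E (fun _ => (1:ℝ)) z - c| ∂m)
        + ∫⁻ z in B \ E, ENNReal.ofReal |Set.indicator E (fun _ => (1:ℝ)) z - c| ∂m := by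
    rw [← lintegral_union (hB.diff hE) (disjoint_sdiff_self_right.mono_left
      Set.inter_subset_right), Set.inter_union_diff]
  have h1 : (∫⁻ z in B ∩ E, ENNReal.ofReal |Set.indicator E (fun _ => (1:ℝ)) z - c| ∂m)
      = ENNReal.ofReal |1 - c| * m (B ∩ E) := by
    rw [setLIntegral_congr_fun (hB.inter hE)
      (fun z hz => by
        rw [Set.indicator_of_mem hz.2]), setLIntegral_const]
  have h2 : (∫⁻ z in B \ E, ENNReal.ofReal |Set.indicator E (fun _ => (1:ℝ)) z - c| ∂m)
      = ENNReal.ofReal |0 - c| * m (B \ E) := by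
    rw [setLIntegral_congr_fun (hB.diff hE)
      (fun z hz => by
        rw [Set.indicator_of_notMem hz.2]), setLIntegral_const]
  rw [hsplit, h1, h2]
  have habs : (1:ℝ) ≤ |1 - c| + |0 - c| := by
    have := abs_add_le (1 - c) c
    simp only [sub_add_cancel, abs_one] at this
    have h0 : |0 - c| = |c| := by rw [zero_sub, abs_neg]
    rw [h0]
    linarith [this]
  calc M = 1 * M := (one_mul M).symm
    _ ≤ ENNReal.ofReal (|1 - c| + |0 - c|) * M := by
        apply mul_le_mul_left
        rw [show (1:ℝ≥0∞) = ENNReal.ofReal 1 by simp]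
        exact ENNReal.ofReal_le_ofReal habs
    _ = (ENNReal.ofReal |1 - c| + ENNReal.ofReal |0 - c|) * M := by
        rw [ENNReal.ofReal_add (abs_nonneg _) (abs_nonneg _)]
    _ = ENNReal.ofReal |1 - c| * M + ENNReal.ofReal |0 - c| * M := by ring
    _ ≤ ENNReal.ofReal |1 - c| * m (B ∩ E) + ENNReal.ofReal |0 - c| * m (B \ E) := by
        gcongr
        · exact min_le_left _ _
        · exact min_le_right _ _

end AuxiliaryLemmas

/-- **Nontrivial sets have positive perimeter** (Remark 2.7): in a length PI space, a set
of finite perimeter with `m(E) > 0` and `m(X \ E) > 0` satisfies `P(E) > 0`. -/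
theorem perimeter_pos_of_nontrivial
    {X : Type*} [MetricSpace X] [CompleteSpace X] [TopologicalSpace.SeparableSpace X]
    [MeasurableSpace X] [BorelSpace X] (m : Measure X)
    (hbf : BoundedlyFinite m) (hPI : IsPIspace m) (hlen : IsLengthSpace X)
    (E : Set X) (hEm : MeasurableSet E) (hEp : HasFinPer m E)
    (hE : 0 < m E) (hEc : 0 < m (Set.univ \ E)) :
    0 < Per m E Set.univ := by
  obtain ⟨⟨C_D, hCD, hd⟩, lam, hlam, C_P, hCP, hpoincare⟩ := hPI
  by_contra hper
  push_neg at hper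
  rw [nonpos_iff_eq_zero] at hper
  have hmne : m ≠ 0 := by
    intro h
    rw [h] at hE
    simp at hE
  have hpos := aux_all_balls_pos hd hmne
  -- a ball containing positive measure of both `E` and its complement
  obtain ⟨x, hx⟩ := aux_density_point hE
  obtain ⟨y, hy⟩ := aux_density_point hEc
  have hr : (0:ℝ) < dist x y + 1 := by positivity
  set r : ℝ := dist x y + 1 with hrdef
  have hBmeas : MeasurableSet (Metric.ball x r) := measurableSet_ball
  have ha : 0 < m (Metric.ball x r ∩ E) := by
    rw [Set.inter_comm]
    exact hx r hr
  have hb : 0 < m (Metric.ball x r \ E) := by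
    refine lt_of_lt_of_le (hy 1 one_pos) (measure_mono ?_)
    rintro z ⟨hz1, hz2⟩
    refine ⟨?_, hz1.2⟩
    rw [Metric.mem_ball] at hz2 ⊢
    calc dist z x ≤ dist z y + dist y x := dist_triangle _ _ _
      _ < 1 + dist y x := by linarith
      _ = r := by rw [hrdef, dist_comm]; ring
  have hBfin : m (Metric.ball x r) < ∞ := hbf _ Metric.isBounded_ball
  set M : ℝ≥0∞ := min (m (Metric.ball x r ∩ E)) (m (Metric.ball x r \ E)) with hMdef
  have hM0 : M ≠ 0 := (lt_min ha hb).ne'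
  have hMne : M ≠ ∞ :=
    ((min_le_left _ _).trans_lt ((measure_mono Set.inter_subset_left).trans_lt hBfin)).ne
  have hRpos : (0:ℝ) < r + 1 := by linarith
  have hrR : r < r + 1 := lt_add_one r
  set c : ℝ≥0∞ := ENNReal.ofReal (C_P (r+1) * r) with hcdef
  have hcne : c ≠ ∞ := ENNReal.ofReal_ne_top
  have hd0 : c + 1 ≠ 0 := by simp
  have hdne : c + 1 ≠ ∞ := ENNReal.add_ne_top.2 ⟨hcne, ENNReal.one_ne_top⟩
  set ε : ℝ≥0∞ := M / (4 * (c + 1)) with hεdef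
  have hε0 : 0 < ε :=
    ENNReal.div_pos hM0 (ENNReal.mul_ne_top (by norm_num) hdne)
  -- extract an optimizing sequence
  have hlt : Per m E Set.univ < ε := by rw [hper]; exact hε0
  simp only [Per, totVar, iInf_lt_iff] at hlt
  obtain ⟨Ω, hΩopen, hΩsub, fn, hlip, hconv, hliminf⟩ := hlt
  have hΩ : Ω = Set.univ := Set.eq_univ_of_univ_subset hΩsub
  subst hΩ
  have hfreq : ∃ᶠ n in atTop,
      (∫⁻ z in Set.univ, slopeOn Set.univ (fn n) z ∂m) < ε :=
    frequently_lt_of_liminf_lt (h := hliminf)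
  -- L¹ convergence on the compact closed ball
  have hK : IsCompact (Metric.closedBall x r) := aux_closedBall_compact hd hbf hpos x r
  have htend := hconv (Metric.closedBall x r) (Set.subset_univ _) hK
  have hM4 : (0:ℝ≥0∞) < M / 4 := ENNReal.div_pos hM0 (by norm_num)
  have hev : ∀ᶠ n in atTop, (∫⁻ z in Metric.closedBall x r,
      ENNReal.ofReal |fn n z - Set.indicator E (fun _ => (1:ℝ)) z| ∂m) < M / 4 :=
    htend.eventually_lt_const hM4
  obtain ⟨n, hslope, hL1⟩ := (hfreq.and_eventually hev).exists
  -- Poincaré inequality for `fn n`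
  have hpoin := hpoincare (fn n) (hlip n) (r+1) hRpos x r hr hrR
  set cn : ℝ := ⨍ z in Metric.ball x r, fn n z ∂m with hcndef
  set A : ℝ≥0∞ := ∫⁻ z in Metric.ball x r, ENNReal.ofReal |fn n z - cn| ∂m with hAdef
  have hμ0 : m (Metric.ball x r) ≠ 0 := (hpos x r hr).ne'
  have hμfin : m (Metric.ball x r) ≠ ∞ := hBfin.ne
  have hlamr : (0:ℝ) < lam * r := by nlinarith
  have hν0 : m (Metric.ball x (lam * r)) ≠ 0 := (hpos x (lam*r) hlamr).ne'
  have hνfin : m (Metric.ball x (lam * r)) ≠ ∞ := (hbf _ Metric.isBounded_ball).ne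
  have hμν : m (Metric.ball x r) ≤ m (Metric.ball x (lam * r)) :=
    measure_mono (Metric.ball_subset_ball (le_mul_of_one_le_left hr.le hlam))
  have hS : (∫⁻ z in Metric.ball x (lam * r), mSlope (fn n) z ∂m) ≤ ε := by
    refine le_of_lt (lt_of_le_of_lt ?_ hslope)
    exact lintegral_mono_set (Set.subset_univ _)
  have hAle : A ≤ c * ε := by
    calc A = A / m (Metric.ball x r) * m (Metric.ball x r) :=
          (ENNReal.div_mul_cancel hμ0 hμfin).symm
      _ ≤ c * ((∫⁻ z in Metric.ball x (lam * r), mSlope (fn n) z ∂m)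
            / m (Metric.ball x (lam * r))) * m (Metric.ball x r) :=
          mul_le_mul_left hpoin _
      _ ≤ c * ((∫⁻ z in Metric.ball x (lam * r), mSlope (fn n) z ∂m)
            / m (Metric.ball x (lam * r))) * m (Metric.ball x (lam * r)) :=
          mul_le_mul_right hμν _
      _ = c * ((∫⁻ z in Metric.ball x (lam * r), mSlope (fn n) z ∂m)
            / m (Metric.ball x (lam * r)) * m (Metric.ball x (lam * r))) := mul_assoc _ _ _
      _ = c * (∫⁻ z in Metric.ball x (lam * r), mSlope (fn n) z ∂m) := by
          rw [ENNReal.div_mul_cancel hν0 hνfin]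
      _ ≤ c * ε := mul_le_mul_right hS _
  -- triangle inequality
  have hmeas : Measurable fun z => ENNReal.ofReal |fn n z - cn| :=
    ENNReal.measurable_ofReal.comp
      (((aux_continuous (hlip n)).measurable.sub measurable_const).abs)
  have htri : (∫⁻ z in Metric.ball x r,
        ENNReal.ofReal |Set.indicator E (fun _ => (1:ℝ)) z - cn| ∂m)
      ≤ A + ∫⁻ z in Metric.ball x r,
          ENNReal.ofReal |fn n z - Set.indicator E (fun _ => (1:ℝ)) z| ∂m := by
    calc (∫⁻ z in Metric.ball x r,
          ENNReal.ofReal |Set.indicator E (fun _ => (1:ℝ)) z - cn| ∂m)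
        ≤ ∫⁻ z in Metric.ball x r, (ENNReal.ofReal |fn n z - cn|
            + ENNReal.ofReal |fn n z - Set.indicator E (fun _ => (1:ℝ)) z|) ∂m := by
          apply lintegral_mono
          intro z
          show ENNReal.ofReal |Set.indicator E (fun _ => (1:ℝ)) z - cn|
              ≤ ENNReal.ofReal |fn n z - cn|
                + ENNReal.ofReal |fn n z - Set.indicator E (fun _ => (1:ℝ)) z|
          rw [← ENNReal.ofReal_add (abs_nonneg _) (abs_nonneg _)]
          apply ENNReal.ofReal_le_ofReal
          have heq : Set.indicator E (fun _ => (1:ℝ)) z - cn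
              = (fn n z - cn) - (fn n z - Set.indicator E (fun _ => (1:ℝ)) z) := by ring
          rw [heq]
          exact abs_sub _ _
      _ = A + ∫⁻ z in Metric.ball x r,
            ENNReal.ofReal |fn n z - Set.indicator E (fun _ => (1:ℝ)) z| ∂m :=
          lintegral_add_left hmeas _
  have hD : (∫⁻ z in Metric.ball x r,
        ENNReal.ofReal |fn n z - Set.indicator E (fun _ => (1:ℝ)) z| ∂m)
      ≤ ∫⁻ z in Metric.closedBall x r,
          ENNReal.ofReal |fn n z - Set.indicator E (fun _ => (1:ℝ)) z| ∂m :=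
    lintegral_mono_set Metric.ball_subset_closedBall
  -- combine
  have hmain : M ≤ c * ε + M / 4 := by
    calc M ≤ ∫⁻ z in Metric.ball x r,
          ENNReal.ofReal |Set.indicator E (fun _ => (1:ℝ)) z - cn| ∂m :=
        aux_indicator_lower hEm measurableSet_ball cn
      _ ≤ A + ∫⁻ z in Metric.ball x r,
            ENNReal.ofReal |fn n z - Set.indicator E (fun _ => (1:ℝ)) z| ∂m := htri
      _ ≤ c * ε + M / 4 := add_le_add hAle ((hD.trans hL1.le))
  have hcε : c * ε ≤ M / 4 := by
    have key : (c + 1) * ε = M / 4 := by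
      rw [hεdef, div_eq_mul_inv, ENNReal.mul_inv (Or.inl (by norm_num)) (Or.inl (by norm_num))]
      calc (c+1) * (M * (4⁻¹ * (c+1)⁻¹)) = (c+1) * (c+1)⁻¹ * (M * 4⁻¹) := by ring
        _ = M * 4⁻¹ := by rw [ENNReal.mul_inv_cancel hd0 hdne, one_mul]
        _ = M / 4 := (div_eq_mul_inv _ _).symm
    calc c * ε ≤ (c + 1) * ε := mul_le_mul_left le_self_add _
      _ = M / 4 := key
  have hfinal : M ≤ M / 2 := by
    calc M ≤ c * ε + M / 4 := hmain
      _ ≤ M / 4 + M / 4 := add_le_add_left hcε _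
      _ = (M + M) / 4 := ENNReal.div_add_div_same
      _ = 2 * M / (2 * 2) := by rw [two_mul]; norm_num
      _ = M / 2 := ENNReal.mul_div_mul_left _ _ (by norm_num) (by norm_num)
  exact absurd hfinal (not_le.2 (ENNReal.half_lt_self hM0 hMne))

end
end

section
/- Consider the metric measure space (ℝ, d_eucl, m), where m is the measure with density |x|^{−1/2} with respect to the Lebesgue measure. Then for every y > 0 the ball B_y(y) = (0, 2y) is not a set of locally finite perimeter in this space; more precisely, |Dχ_{(0,2y)}|(Ω) = +∞ for every open set Ω containing 0. -/
open MeasureTheory Metric Set Filter Topology ENNReal Bornology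
open scoped symmDiff

noncomputable section

variable {X : Type*}

section Aux

lemma limsup_comp_le_limsup (u : ℝ → ℝ≥0∞) {g : ℕ → ℝ} {F : Filter ℝ}
    (h : Tendsto g atTop F) :
    Filter.limsup (fun n => u (g n)) atTop ≤ Filter.limsup u F := by
  have e : Filter.limsup (fun n => u (g n)) atTop = Filter.limsup u (Filter.map g atTop) := by
    rw [Filter.limsup_eq, Filter.limsup_eq]
    congr 1
  rw [e]
  exact Filter.limsup_le_limsup_of_le h

lemma rpow_neg_half_anti {u v : ℝ} (hu : 0 < u) (huv : u ≤ v) :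
    v ^ (-(1:ℝ)/2) ≤ u ^ (-(1:ℝ)/2) := by
  have hv : 0 < v := lt_of_lt_of_le hu huv
  rw [show (-(1:ℝ)/2) = -(1/2) by ring, Real.rpow_neg hv.le, Real.rpow_neg hu.le]
  exact inv_anti₀ (Real.rpow_pos_of_pos hu _) (Real.rpow_le_rpow hu.le huv (by norm_num))

/-- Uniform small-scale Lipschitz bound on a compact subset. -/
lemma locLip_uniform {Ω : Set ℝ} {f : ℝ → ℝ} (hf : LocLipOn Ω f)
    {s : Set ℝ} (hs : IsCompact s) (hsub : s ⊆ Ω) :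
    ∃ ρ > (0:ℝ), ∃ K : ℝ, 0 ≤ K ∧
      ∀ x ∈ s, ∀ y ∈ s, dist x y ≤ ρ → dist (f x) (f y) ≤ K * dist x y := by
  rcases s.eq_empty_or_nonempty with rfl | hne
  · exact ⟨1, one_pos, 0, le_refl 0, by simp⟩
  have h := fun x : s => hf x (hsub x.2)
  choose r hr K hK using h
  have hcover : s ⊆ ⋃ x : s, ball (x : ℝ) (r x / 2) := by
    intro z hz
    exact mem_iUnion.2 ⟨⟨z, hz⟩, mem_ball_self (half_pos (hr ⟨z, hz⟩))⟩
  obtain ⟨t, ht⟩ := hs.elim_finite_subcover (fun x : s => ball (x : ℝ) (r x / 2))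
    (fun x => isOpen_ball) hcover
  have htne : t.Nonempty := by
    obtain ⟨z, hz⟩ := hne
    obtain ⟨i, hit, _⟩ := mem_iUnion₂.1 (ht hz)
    exact ⟨i, hit⟩
  refine ⟨t.inf' htne (fun i => r i / 2), ?_, ((t.sup K : NNReal) : ℝ),
    (t.sup K).coe_nonneg, ?_⟩
  · exact (Finset.lt_inf'_iff _).2 fun i _ => half_pos (hr i)
  · intro x hx y hy hxy
    obtain ⟨i, hit, hxball⟩ := mem_iUnion₂.1 (ht hx)
    have hρi : t.inf' htne (fun i => r i / 2) ≤ r i / 2 := Finset.inf'_le _ hit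
    have hyball : y ∈ ball (i : ℝ) (r i) := by
      have h1 : dist y (i : ℝ) ≤ dist y x + dist x i := dist_triangle _ _ _
      have h2 : dist x (i : ℝ) < r i / 2 := hxball
      have h3 : dist y x ≤ r i / 2 := by
        rw [dist_comm]; exact hxy.trans hρi
      have h4 := hr i
      exact mem_ball.2 (by linarith)
    have hxball' : x ∈ ball (i : ℝ) (r i) := by
      have h2 : dist x (i : ℝ) < r i / 2 := hxball
      have h4 := hr i
      exact mem_ball.2 (by linarith)
    have hlip := (hK i).dist_le_mul x ⟨hxball', hsub hx⟩ y ⟨hyball, hsub hy⟩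
    refine hlip.trans (mul_le_mul_of_nonneg_right ?_ dist_nonneg)
    exact_mod_cast NNReal.coe_le_coe.2 (Finset.le_sup hit)

end Aux
section Aux2

lemma lintegral_density_lower (m : Measure ℝ)
    (hm : m = volume.withDensity fun x => ENNReal.ofReal (|x| ^ (-(1:ℝ) / 2)))
    {s : Set ℝ} (hs : MeasurableSet s) {δ : ℝ} (hδ : 0 < δ)
    (hsδ : ∀ x ∈ s, |x| ≤ δ) (g : ℝ → ℝ≥0∞) :
    ENNReal.ofReal (δ ^ (-(1:ℝ)/2)) * ∫⁻ x in s, g x ∂volume ≤ ∫⁻ x in s, g x ∂m := by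
  have hwmeas : Measurable fun x : ℝ => ENNReal.ofReal (|x| ^ (-(1:ℝ)/2)) :=
    (measurable_abs.pow_const _).ennreal_ofReal
  rw [hm, setLIntegral_withDensity_eq_setLIntegral_mul_non_measurable volume hwmeas g hs
    (ae_of_all _ fun x => ENNReal.ofReal_lt_top)]
  calc ENNReal.ofReal (δ ^ (-(1:ℝ)/2)) * ∫⁻ x in s, g x ∂volume
      ≤ ∫⁻ x in s, ENNReal.ofReal (δ ^ (-(1:ℝ)/2)) * g x ∂volume := lintegral_const_mul_le _ _
    _ ≤ ∫⁻ x in s, ((fun x => ENNReal.ofReal (|x| ^ (-(1:ℝ)/2))) * g) x ∂volume := ?_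
  apply lintegral_mono_ae
  have h0 : ∀ᵐ x ∂(volume.restrict s), x ≠ (0:ℝ) := by
    refine ae_iff.2 ?_
    have : {x : ℝ | ¬ x ≠ 0} = {0} := by ext x; simp
    rw [this]
    exact le_antisymm ((Measure.restrict_apply_le _ _).trans (by simp)) (zero_le)
  filter_upwards [h0, ae_restrict_mem hs] with x hx0 hxs
  have hax : 0 < |x| := abs_pos.2 hx0
  refine mul_le_mul_left (ENNReal.ofReal_le_ofReal ?_) _
  exact rpow_neg_half_anti hax (hsδ x hxs)

lemma exists_small {g : ℝ → ℝ} {p q : ℝ} (hpq : p < q)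
    (h : ∫⁻ x in Set.Ioo p q, ENNReal.ofReal |g x| ∂volume
        < ENNReal.ofReal (1/4) * ENNReal.ofReal (q - p)) :
    ∃ x ∈ Set.Ioo p q, |g x| < 1/4 := by
  by_contra hcon
  push_neg at hcon
  refine absurd h (not_lt.2 ?_)
  calc ENNReal.ofReal (1/4) * ENNReal.ofReal (q - p)
      = ∫⁻ _x in Set.Ioo p q, ENNReal.ofReal (1/4) ∂volume := by
        rw [setLIntegral_const, Real.volume_Ioo]
    _ ≤ ∫⁻ x in Set.Ioo p q, ENNReal.ofReal |g x| ∂volume := by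
        apply lintegral_mono_ae
        filter_upwards [ae_restrict_mem measurableSet_Ioo] with x hx
        exact ENNReal.ofReal_le_ofReal (hcon x hx)

end Aux2
section Aux3

lemma lower_bound_slope {Ω : Set ℝ} {f : ℝ → ℝ} (hf : LocLipOn Ω f)
    {a b ε : ℝ} (hab : a < b) (hε : 0 < ε) (hsub : Set.Icc (a - ε) (b + ε) ⊆ Ω) :
    ENNReal.ofReal |f b - f a| ≤ ∫⁻ x in Set.Ioo a b, slopeOn Ω f x ∂volume := by
  obtain ⟨ρ, hρ, K, hK0, hKlip⟩ := locLip_uniform hf isCompact_Icc hsub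
  have ha_s : a ∈ Set.Icc (a - ε) (b + ε) := ⟨by linarith, by linarith⟩
  have hb_s : b ∈ Set.Icc (a - ε) (b + ε) := ⟨by linarith, by linarith⟩
  -- the clamp function
  set c : ℝ → ℝ := fun x => max (a - ε) (min (b + ε) x) with hc
  have hclampLip : LipschitzWith 1 c := (LipschitzWith.id.const_min (b + ε)).const_max (a - ε)
  have hcs : ∀ x, c x ∈ Set.Icc (a - ε) (b + ε) :=
    fun x => ⟨le_max_left _ _, max_le (by linarith) (min_le_left _ _)⟩
  have hceq : ∀ x ∈ Set.Icc (a - ε) (b + ε), c x = x := by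
    intro x hx
    rw [hc]
    dsimp only
    rw [min_eq_right hx.2, max_eq_right hx.1]
  set F : ℝ → ℝ := fun x => f (c x) with hFdef
  have hFs : ∀ x y : ℝ, dist x y ≤ ρ → dist (F x) (F y) ≤ K * dist x y := by
    intro x y hxy
    have h1 : dist (c x) (c y) ≤ dist x y := by
      simpa using hclampLip.dist_le_mul x y
    calc dist (F x) (F y) ≤ K * dist (c x) (c y) :=
          hKlip _ (hcs x) _ (hcs y) (h1.trans hxy)
      _ ≤ K * dist x y := mul_le_mul_of_nonneg_left h1 hK0
  have hFcont : Continuous F := by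
    rw [Metric.continuous_iff]
    intro x ε' hε'
    refine ⟨min ρ (ε' / (K + 1)), lt_min hρ (div_pos hε' (by linarith)), fun z hz => ?_⟩
    have h1 : dist (F z) (F x) ≤ K * dist z x :=
      hFs z x (le_of_lt (lt_of_lt_of_le hz (min_le_left _ _)))
    have h2 : dist z x < ε' / (K + 1) := lt_of_lt_of_le hz (min_le_right _ _)
    calc dist (F z) (F x) ≤ K * dist z x := h1
      _ ≤ K * (ε' / (K + 1)) := mul_le_mul_of_nonneg_left h2.le hK0
      _ < (K + 1) * (ε' / (K + 1)) := by
          have : (0:ℝ) < ε' / (K + 1) := div_pos hε' (by linarith)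
          nlinarith
      _ = ε' := mul_div_cancel₀ _ (by linarith)
  have hFa : F a = f a := by rw [hFdef]; dsimp only; rw [hceq a ha_s]
  have hFb : F b = f b := by rw [hFdef]; dsimp only; rw [hceq b hb_s]
  -- the sequence of increments
  set ε' : ℝ := min ε ρ with hε'def
  have hε'pos : 0 < ε' := lt_min hε hρ
  have hε'ε : ε' ≤ ε := min_le_left _ _
  have hε'ρ : ε' ≤ ρ := min_le_right _ _
  set h : ℕ → ℝ := fun n => ε' / (n + 1) with hhdef
  have hhpos : ∀ n, 0 < h n := fun n => div_pos hε'pos (by positivity)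
  have hhle : ∀ n, h n ≤ ε' := by
    intro n
    rw [hhdef]
    dsimp only
    apply div_le_self hε'pos.le
    have : (0:ℝ) ≤ (n:ℝ) := Nat.cast_nonneg n
    linarith
  have hh0 : Tendsto h atTop (𝓝 0) := by
    rw [hhdef]
    exact Tendsto.div_atTop tendsto_const_nhds
      (tendsto_atTop_add_const_right atTop 1 tendsto_natCast_atTop_atTop)
  -- the difference quotients
  set Q : ℕ → ℝ → ℝ≥0∞ := fun n x => ENNReal.ofReal (|F (x + h n) - F x| / h n) with hQdef
  have hgcont : ∀ n, Continuous fun x => (F (x + h n) - F x) / h n := fun n =>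
    ((hFcont.comp (continuous_id.add continuous_const)).sub hFcont).div_const _
  have hQmeas : ∀ n, Measurable (Q n) := by
    intro n
    exact (((hFcont.comp (continuous_id.add continuous_const)).sub
      hFcont).abs.div_const _).measurable.ennreal_ofReal
  have hQbound : ∀ n x, Q n x ≤ ENNReal.ofReal K := by
    intro n x
    apply ENNReal.ofReal_le_ofReal
    rw [div_le_iff₀ (hhpos n)]
    have hd : dist (x + h n) x = h n := by
      rw [Real.dist_eq]
      simp [abs_of_nonneg (hhpos n).le]
    calc |F (x + h n) - F x| = dist (F (x + h n)) (F x) := (Real.dist_eq _ _).symm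
      _ ≤ K * dist (x + h n) x := hFs _ _ (by rw [hd]; exact (hhle n).trans hε'ρ)
      _ = K * h n := by rw [hd]
  -- pointwise comparison with the slope
  have hslope : ∀ x ∈ Set.Ioo a b, Filter.limsup (fun n => Q n x) atTop ≤ slopeOn Ω f x := by
    intro x hx
    have hxs : x ∈ Set.Icc (a - ε) (b + ε) := ⟨by linarith [hx.1], by linarith [hx.2]⟩
    have hxh : ∀ n, x + h n ∈ Set.Icc (a - ε) (b + ε) := by
      intro n
      constructor
      · have := (hhpos n).le; linarith [hx.1]
      · have h1 := hhle n; linarith [hx.2]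
    have heq : ∀ n, Q n x =
        (fun z => ENNReal.ofReal (|f x - f z| / dist x z)) (x + h n) := by
      intro n
      have hd : dist x (x + h n) = h n := by
        rw [Real.dist_eq]
        simp [abs_of_nonneg (hhpos n).le]
      have e1 : F (x + h n) = f (x + h n) := by
        rw [hFdef]; dsimp only; rw [hceq _ (hxh n)]
      have e2 : F x = f x := by rw [hFdef]; dsimp only; rw [hceq _ hxs]
      rw [hQdef]
      dsimp only
      rw [e1, e2, hd, abs_sub_comm]
    have htend : Tendsto (fun n => x + h n) atTop (𝓝[Ω \ {x}] x) := by
      apply tendsto_nhdsWithin_of_tendsto_nhds_of_eventually_within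
      · have : Tendsto (fun n => x + h n) atTop (𝓝 (x + 0)) :=
          tendsto_const_nhds.add hh0
        simpa using this
      · refine Eventually.of_forall fun n => ⟨hsub (hxh n), ?_⟩
        simp only [Set.mem_singleton_iff]
        have := hhpos n
        intro hcontra
        nlinarith [hcontra]
    calc Filter.limsup (fun n => Q n x) atTop
        = Filter.limsup
            (fun n => (fun z => ENNReal.ofReal (|f x - f z| / dist x z)) (x + h n)) atTop := by
          congr 1
          funext n
          exact heq n
      _ ≤ Filter.limsup (fun z => ENNReal.ofReal (|f x - f z| / dist x z)) (𝓝[Ω \ {x}] x) :=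
          limsup_comp_le_limsup _ htend
      _ = slopeOn Ω f x := rfl
  -- reverse Fatou
  have hg_fin : ∫⁻ _x in Set.Ioo a b, ENNReal.ofReal K ∂volume ≠ ∞ := by
    rw [setLIntegral_const, Real.volume_Ioo]
    exact ENNReal.mul_ne_top ENNReal.ofReal_ne_top ENNReal.ofReal_ne_top
  have hrevFatou := limsup_lintegral_le (μ := volume.restrict (Set.Ioo a b))
    (fun _ => ENNReal.ofReal K) hQmeas (fun n => ae_of_all _ (hQbound n)) hg_fin
  -- interval integrals of the quotients
  have hFi : ∀ u v : ℝ, IntervalIntegrable F volume u v := fun u v =>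
    hFcont.intervalIntegrable u v
  set I : ℕ → ℝ := fun n => ∫ x in a..b, (F (x + h n) - F x) / h n with hIdef
  have hIb : ∀ n, ENNReal.ofReal |I n| ≤ ∫⁻ x in Set.Ioo a b, Q n x ∂volume := by
    intro n
    have h1 : |I n| ≤ ∫ x in a..b, |(F (x + h n) - F x) / h n| :=
      intervalIntegral.abs_integral_le_integral_abs hab.le
    have h2 : (∫ x in a..b, |(F (x + h n) - F x) / h n|)
        = ∫ x in Set.Ioc a b, |(F (x + h n) - F x) / h n| ∂volume :=
      intervalIntegral.integral_of_le hab.le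
    have h3 : ENNReal.ofReal (∫ x in Set.Ioc a b, |(F (x + h n) - F x) / h n| ∂volume)
        = ∫⁻ x in Set.Ioc a b, ENNReal.ofReal |(F (x + h n) - F x) / h n| ∂volume := by
      apply ofReal_integral_eq_lintegral_ofReal
      · exact ((hgcont n).abs.integrableOn_Icc).mono_set Set.Ioc_subset_Icc_self
      · exact ae_of_all _ fun x => abs_nonneg _
    have h4 : (∫⁻ x in Set.Ioc a b, ENNReal.ofReal |(F (x + h n) - F x) / h n| ∂volume)
        = ∫⁻ x in Set.Ioo a b, Q n x ∂volume := by
      rw [← Measure.restrict_congr_set Ioo_ae_eq_Ioc]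
      apply lintegral_congr
      intro x
      rw [hQdef]
      dsimp only
      rw [abs_div, abs_of_pos (hhpos n)]
    calc ENNReal.ofReal |I n| ≤ ENNReal.ofReal (∫ x in a..b, |(F (x + h n) - F x) / h n|) :=
          ENNReal.ofReal_le_ofReal h1
      _ = ∫⁻ x in Set.Ioo a b, Q n x ∂volume := by rw [h2, h3, h4]
  -- the limit of I n
  have hIsplit : ∀ n, I n = (∫ x in b..(b + h n), F x) / h n - (∫ x in a..(a + h n), F x) / h n := by
    intro n
    have e0 : I n = ((∫ x in a..b, F (x + h n)) - ∫ x in a..b, F x) / h n := by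
      rw [hIdef]
      dsimp only
      have int1 : IntervalIntegrable (fun x => F (x + h n)) volume a b :=
        (hFcont.comp (continuous_id.add continuous_const) :
          Continuous fun x : ℝ => F (x + h n)).intervalIntegrable a b
      rw [← intervalIntegral.integral_sub int1 (hFi a b)]
      rw [intervalIntegral.integral_div]
    have e1 : (∫ x in a..b, F (x + h n)) = ∫ x in (a + h n)..(b + h n), F x :=
      intervalIntegral.integral_comp_add_right _ _
    have e2 : (∫ x in a..(a + h n), F x) + (∫ x in (a + h n)..(b + h n), F x)
        = ∫ x in a..(b + h n), F x :=
      intervalIntegral.integral_add_adjacent_intervals (hFi _ _) (hFi _ _)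
    have e3 : (∫ x in a..b, F x) + (∫ x in b..(b + h n), F x) = ∫ x in a..(b + h n), F x :=
      intervalIntegral.integral_add_adjacent_intervals (hFi _ _) (hFi _ _)
    rw [e0, e1]
    rw [div_sub_div_same]
    congr 1
    linarith
  have hlimv : ∀ v : ℝ, Tendsto (fun n => (∫ x in v..(v + h n), F x) / h n) atTop (𝓝 (F v)) := by
    intro v
    have hd : HasDerivAt (fun u => ∫ x in v..u, F x) (F v) v :=
      intervalIntegral.integral_hasDerivAt_right (hFi v v)
        (hFcont.stronglyMeasurableAtFilter _ _) hFcont.continuousAt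
    have hslopetend := hasDerivAt_iff_tendsto_slope.1 hd
    have hseq : Tendsto (fun n => v + h n) atTop (𝓝[≠] v) := by
      apply tendsto_nhdsWithin_of_tendsto_nhds_of_eventually_within
      · have : Tendsto (fun n => v + h n) atTop (𝓝 (v + 0)) := tendsto_const_nhds.add hh0
        simpa using this
      · refine Eventually.of_forall fun n => ?_
        simp only [Set.mem_compl_iff, Set.mem_singleton_iff]
        have := hhpos n
        intro hcontra
        nlinarith [hcontra]
    have hcomp := hslopetend.comp hseq
    apply hcomp.congr
    intro n
    show slope (fun u => ∫ x in v..u, F x) v (v + h n) = _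
    rw [slope_def_field]
    rw [intervalIntegral.integral_same]
    simp
  have hItend : Tendsto I atTop (𝓝 (F b - F a)) :=
    Tendsto.congr (fun n => (hIsplit n).symm) ((hlimv b).sub (hlimv a))
  -- conclude
  have hofRealtend : Tendsto (fun n => ENNReal.ofReal |I n|) atTop
      (𝓝 (ENNReal.ofReal |f b - f a|)) := by
    rw [← hFa, ← hFb]
    exact (ENNReal.continuous_ofReal.tendsto _).comp
      ((continuous_abs.tendsto _).comp hItend)
  calc ENNReal.ofReal |f b - f a|
      = Filter.liminf (fun n => ENNReal.ofReal |I n|) atTop := (hofRealtend.liminf_eq).symm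
    _ ≤ Filter.liminf (fun n => ∫⁻ x in Set.Ioo a b, Q n x ∂volume) atTop :=
        Filter.liminf_le_liminf (Eventually.of_forall hIb)
    _ ≤ Filter.limsup (fun n => ∫⁻ x in Set.Ioo a b, Q n x ∂volume) atTop :=
        Filter.liminf_le_limsup
    _ ≤ ∫⁻ x in Set.Ioo a b, Filter.limsup (fun n => Q n x) atTop ∂volume := hrevFatou
    _ ≤ ∫⁻ x in Set.Ioo a b, slopeOn Ω f x ∂volume := by
        apply lintegral_mono_ae
        filter_upwards [ae_restrict_mem measurableSet_Ioo] with x hx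
        exact hslope x hx

end Aux3
/-- **A PI space where the growth condition fails** (Remark 3.5): on `ℝ` with the
measure of density `|x|^{-1/2}`, for every `y > 0` the ball `B_y(y) = (0, 2y)` is not a
set of locally finite perimeter; more precisely its total variation is infinite on
every open neighbourhood of `0`. -/
theorem example_ball_not_locally_finite_perimeter
    (m : Measure ℝ)
    (hm : m = volume.withDensity fun x => ENNReal.ofReal (|x| ^ (-(1:ℝ) / 2))) :
    ∀ y : ℝ, 0 < y →
      (¬ HasLocFinPer m (Metric.ball y y)) ∧
      ∀ Ω : Set ℝ, IsOpen Ω → (0:ℝ) ∈ Ω →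
        totVar m (Set.indicator (Metric.ball y y) fun _ => (1:ℝ)) Ω = ∞ := by
  intro y hy
  have hball : Metric.ball y y = Set.Ioo 0 (2 * y) := by
    rw [Real.ball_eq_Ioo]
    norm_num [two_mul]
  have main : ∀ Ω : Set ℝ, IsOpen Ω → (0:ℝ) ∈ Ω →
      totVar m (Set.indicator (Metric.ball y y) fun _ => (1:ℝ)) Ω = ∞ := by
    intro Ω hΩ hΩ0
    simp only [totVar, iInf_eq_top]
    intro Ω₁ hΩ₁ hsub fn hlip hconv
    obtain ⟨R, hR, hRsub⟩ := Metric.isOpen_iff.1 hΩ₁ 0 (hsub hΩ0)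
    set χ : ℝ → ℝ := Set.indicator (Metric.ball y y) fun _ => (1:ℝ) with hχ
    have hχ0 : ∀ x : ℝ, x ≤ 0 → χ x = 0 := by
      intro x hx
      rw [hχ, hball]
      exact Set.indicator_of_notMem (fun hmem => absurd hmem.1 (not_lt.2 hx)) _
    have hχ1 : ∀ x : ℝ, 0 < x → x < 2 * y → χ x = 1 := by
      intro x hx1 hx2
      rw [hχ, hball]
      exact Set.indicator_of_mem (show x ∈ Set.Ioo 0 (2*y) from ⟨hx1, hx2⟩) _
    -- key estimate for every small δ
    have key : ∀ δ : ℝ, 0 < δ → δ < 2 * y → 2 * δ < R →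
        ENNReal.ofReal (δ ^ (-(1:ℝ)/2) / 2) ≤
          Filter.liminf (fun n => ∫⁻ x in Ω₁, slopeOn Ω₁ (fn n) x ∂m) atTop := by
      intro δ hδ hδy hδR
      have hIccsub : Set.Icc (-(2*δ)) (2*δ) ⊆ Ω₁ := by
        intro x hx
        apply hRsub
        rw [mem_ball, Real.dist_eq, sub_zero]
        have h1 := hx.1
        have h2 := hx.2
        exact abs_lt.2 ⟨by linarith, by linarith⟩
      have hK : Set.Icc (-δ) δ ⊆ Ω₁ :=
        subset_trans (Set.Icc_subset_Icc (by linarith) (by linarith)) hIccsub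
      have hB := hconv (Set.Icc (-δ) δ) hK isCompact_Icc
      set c : ℝ := δ ^ (-(1:ℝ)/2) with hcdef
      have hcpos : 0 < c := Real.rpow_pos_of_pos hδ _
      have hcne : ENNReal.ofReal c ≠ 0 := (ENNReal.ofReal_pos.2 hcpos).ne'
      -- transfer L¹ convergence from m to volume
      have hA : Tendsto (fun n => ∫⁻ x in Set.Icc (-δ) δ, ENNReal.ofReal |fn n x - χ x| ∂volume)
          atTop (𝓝 0) := by
        rw [ENNReal.tendsto_nhds_zero]
        intro ε hε
        have hε' : (0:ℝ≥0∞) < ENNReal.ofReal c * ε :=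
          ENNReal.mul_pos hcne hε.ne'
        filter_upwards [ENNReal.tendsto_nhds_zero.1 hB (ENNReal.ofReal c * ε) hε'] with n hn
        have hlow := lintegral_density_lower m hm measurableSet_Icc hδ
          (fun x hx => abs_le.2 ⟨hx.1, hx.2⟩) (fun x => ENNReal.ofReal |fn n x - χ x|)
        have hchain : ENNReal.ofReal c *
            (∫⁻ x in Set.Icc (-δ) δ, ENNReal.ofReal |fn n x - χ x| ∂volume)
            ≤ ENNReal.ofReal c * ε := hlow.trans hn
        exact (ENNReal.mul_le_mul_iff_right hcne ENNReal.ofReal_ne_top).1 hchain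
      -- eventually the integral is small
      have hposbound : (0:ℝ≥0∞) < ENNReal.ofReal (1/4) * ENNReal.ofReal δ :=
        ENNReal.mul_pos (ENNReal.ofReal_pos.2 (by norm_num)).ne' (ENNReal.ofReal_pos.2 hδ).ne'
      have hev := hA.eventually_lt_const hposbound
      -- main eventual lower bound
      have hfinal : ∀ᶠ n in atTop, ENNReal.ofReal (δ ^ (-(1:ℝ)/2) / 2) ≤
          ∫⁻ x in Ω₁, slopeOn Ω₁ (fn n) x ∂m := by
        filter_upwards [hev] with n hn
        -- integral over negative part
        have hneg : ∫⁻ x in Set.Ioo (-δ) 0, ENNReal.ofReal |fn n x| ∂volume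
            < ENNReal.ofReal (1/4) * ENNReal.ofReal δ := by
          refine lt_of_le_of_lt ?_ hn
          have he : ∫⁻ x in Set.Ioo (-δ) 0, ENNReal.ofReal |fn n x| ∂volume
              = ∫⁻ x in Set.Ioo (-δ) 0, ENNReal.ofReal |fn n x - χ x| ∂volume := by
            apply lintegral_congr_ae
            filter_upwards [ae_restrict_mem measurableSet_Ioo] with x hx
            rw [hχ0 x hx.2.le, sub_zero]
          rw [he]
          exact lintegral_mono_set (fun x hx => ⟨hx.1.le, by linarith [hx.2]⟩)
        have hpos : ∫⁻ x in Set.Ioo 0 δ, ENNReal.ofReal |fn n x - 1| ∂volume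
            < ENNReal.ofReal (1/4) * ENNReal.ofReal δ := by
          refine lt_of_le_of_lt ?_ hn
          have he : ∫⁻ x in Set.Ioo 0 δ, ENNReal.ofReal |fn n x - 1| ∂volume
              = ∫⁻ x in Set.Ioo 0 δ, ENNReal.ofReal |fn n x - χ x| ∂volume := by
            apply lintegral_congr_ae
            filter_upwards [ae_restrict_mem measurableSet_Ioo] with x hx
            rw [hχ1 x hx.1 (by linarith [hx.2])]
          rw [he]
          exact lintegral_mono_set (fun x hx => ⟨by linarith [hx.1], hx.2.le⟩)
        obtain ⟨a', ha'mem, ha'⟩ := exists_small (by linarith : -δ < (0:ℝ))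
          (by rw [show (0:ℝ) - (-δ) = δ by ring]; exact hneg)
        obtain ⟨b', hb'mem, hb'⟩ := exists_small hδ
          (by rw [show δ - 0 = δ by ring]; exact hpos)
        -- |fn n b' - fn n a'| ≥ 1/2
        have hgap : 1/2 ≤ |fn n b' - fn n a'| := by
          have h1 := abs_lt.1 ha'
          have h2 := abs_lt.1 hb'
          have : 1/2 ≤ fn n b' - fn n a' := by linarith [h1.1, h1.2, h2.1, h2.2]
          exact this.trans (le_abs_self _)
        -- apply the slope lower bound on (a', b')
        have ha'b' : a' < b' := lt_trans ha'mem.2 hb'mem.1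
        have hsubIcc : Set.Icc (a' - δ) (b' + δ) ⊆ Ω₁ := by
          refine subset_trans (Set.Icc_subset_Icc ?_ ?_) hIccsub
          · linarith [ha'mem.1]
          · linarith [hb'mem.2]
        have hlem := lower_bound_slope (hlip n) ha'b' hδ hsubIcc
        have hhalf : ENNReal.ofReal (1/2) ≤ ∫⁻ x in Set.Ioo a' b', slopeOn Ω₁ (fn n) x ∂volume :=
          le_trans (ENNReal.ofReal_le_ofReal hgap) hlem
        -- multiply by the density lower bound
        have habs : ∀ x ∈ Set.Ioo a' b', |x| ≤ δ := by
          intro x hx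
          have h1 := hx.1
          have h2 := hx.2
          have h3 := ha'mem.1
          have h4 := hb'mem.2
          exact abs_le.2 ⟨by linarith, by linarith⟩
        have hdens := lintegral_density_lower m hm measurableSet_Ioo hδ habs
          (fun x => slopeOn Ω₁ (fn n) x)
        have hsubΩ : Set.Ioo a' b' ⊆ Ω₁ := by
          intro x hx
          apply hIccsub
          have h1 := ha'mem.1
          have h2 := hb'mem.2
          exact ⟨by linarith [hx.1], by linarith [hx.2]⟩
        calc ENNReal.ofReal (δ ^ (-(1:ℝ)/2) / 2)
            = ENNReal.ofReal c * ENNReal.ofReal (1/2) := by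
              rw [← ENNReal.ofReal_mul hcpos.le]
              congr 1
              rw [hcdef]
              ring
          _ ≤ ENNReal.ofReal c * ∫⁻ x in Set.Ioo a' b', slopeOn Ω₁ (fn n) x ∂volume :=
              mul_le_mul_right hhalf _
          _ ≤ ∫⁻ x in Set.Ioo a' b', slopeOn Ω₁ (fn n) x ∂m := hdens
          _ ≤ ∫⁻ x in Ω₁, slopeOn Ω₁ (fn n) x ∂m := lintegral_mono_set hsubΩ
      exact Filter.le_liminf_of_le (by isBoundedDefault) hfinal
    -- conclude: the liminf is infinite
    set L := Filter.liminf (fun n => ∫⁻ x in Ω₁, slopeOn Ω₁ (fn n) x ∂m) atTop with hL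
    have hM : ∀ M : ℝ, ENNReal.ofReal M ≤ L := by
      intro M
      set s0 : ℝ := (2 * max M 1)⁻¹ with hs0def
      have hmax : (0:ℝ) < max M 1 := lt_of_lt_of_le one_pos (le_max_right _ _)
      have hs0 : 0 < s0 := by rw [hs0def]; positivity
      set δ : ℝ := min (min y (R/4)) (s0^2) with hδdef
      have hδpos : 0 < δ := lt_min (lt_min hy (by linarith)) (by positivity)
      have hδ1 : δ < 2 * y := by
        have : δ ≤ y := (min_le_left _ _).trans (min_le_left _ _)
        linarith
      have hδ2 : 2 * δ < R := by
        have : δ ≤ R/4 := (min_le_left _ _).trans (min_le_right _ _)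
        linarith
      refine le_trans ?_ (key δ hδpos hδ1 hδ2)
      apply ENNReal.ofReal_le_ofReal
      have hδs : δ ≤ s0^2 := min_le_right _ _
      have h3 : (s0^2) ^ (-(1:ℝ)/2) ≤ δ ^ (-(1:ℝ)/2) := rpow_neg_half_anti hδpos hδs
      have h4 : ((s0^2 : ℝ)) ^ (-(1:ℝ)/2) = 2 * max M 1 := by
        have e1 : (s0^2 : ℝ) = s0 ^ (2:ℝ) := by
          rw [← Real.rpow_natCast s0 2]
          norm_num
        rw [e1, ← Real.rpow_mul hs0.le]
        norm_num
        rw [Real.rpow_neg_one]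
        rw [hs0def, inv_inv]
      have hM1 : M ≤ max M 1 := le_max_left _ _
      have h5 : 2 * max M 1 ≤ δ ^ (-(1:ℝ)/2) := h4 ▸ h3
      linarith
    by_contra hne
    have hne' : L ≠ ⊤ := hne
    have h1 : ENNReal.ofReal (L.toReal + 1) ≤ ENNReal.ofReal L.toReal := by
      rw [ENNReal.ofReal_toReal hne']
      exact hM (L.toReal + 1)
    have h2 := (ENNReal.ofReal_le_ofReal_iff ENNReal.toReal_nonneg).1 h1
    linarith
  refine ⟨?_, main⟩
  intro hper
  obtain ⟨r, hr, hfin⟩ := hper 0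
  rw [Per] at hfin
  rw [main (Metric.ball 0 r) Metric.isOpen_ball (Metric.mem_ball_self hr)] at hfin
  exact absurd hfin (by simp)

end
end
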